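/- Let c₁, c₂ > 0 and define A(v) = c₁·v + c₂·‖v‖·v on a real inner product space E. Then for all u, v ∈ E, ⟨A(u) − A(v), u − v⟩ ≥ c₁·‖u − v‖². -/

import Mathlib

open RealInnerProductSpace

theorem darcy_forchheimer_monotone {E : Type*} [NormedAddCommGroup E] [InnerProductSpace ℝ E]
    (c₁ c₂ : ℝ) (hc₁ : 0 < c₁) (hc₂ : 0 < c₂)
    (A : E → E) (hA : ∀ v, A v = c₁ • v + c₂ • (‖v‖ • v)) (u v : E) :
    c₁ * ‖u - v‖ ^ 2 ≤ ⟪A u - A v, u - v⟫ := by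
  rw [hA, hA]
  have huv := real_inner_le_norm u v
  have hu : (0:ℝ) ≤ ‖u‖ := norm_nonneg u
  have hv : (0:ℝ) ≤ ‖v‖ := norm_nonneg v
  have h1 : ⟪(c₁ • u + c₂ • (‖u‖ • u)) - (c₁ • v + c₂ • (‖v‖ • v)), u - v⟫ =
      c₁ * ⟪u - v, u - v⟫ + c₂ * (‖u‖ * ⟪u, u - v⟫ - ‖v‖ * ⟪v, u - v⟫) := by
    simp [inner_sub_left, inner_sub_right, inner_add_left, real_inner_smul_left]
    rw [norm_sub_sq_real, real_inner_comm u v]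
    ring
  rw [h1, real_inner_self_eq_norm_sq]
  have h2 : 0 ≤ ‖u‖ * ⟪u, u - v⟫ - ‖v‖ * ⟪v, u - v⟫ := by
    have hu2 : ⟪u, u⟫ = ‖u‖ ^ 2 := real_inner_self_eq_norm_sq u
    have hv2 : ⟪v, v⟫ = ‖v‖ ^ 2 := real_inner_self_eq_norm_sq v
    have hsym : ⟪v, u⟫ = ⟪u, v⟫ := real_inner_comm u v
    rw [inner_sub_right, inner_sub_right, hu2, hv2, hsym]
    nlinarith [sq_nonneg (‖u‖ - ‖v‖), mul_nonneg (mul_nonneg hu hv) (sub_nonneg.2 huv)]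
  nlinarith [mul_nonneg hc₂.le h2]
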